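/- Let (T,d) be a compact metric space, m a Borel probability measure on T, φ a Young function with φ(1)=1, and R > 2. Then for every integer c ≥ 1 and every x ∈ T: Σ_{k≥c} r_k(x) R^k ≤ (R/(R−1)) ∫_0^{r_c(x)} φ^{-1}(1/m(B(x,ε))) dε, where φ^{-1} is the generalized inverse of φ and the conventions 1/0 := ∞, φ^{-1}(∞) := ∞ are used (both sides may be infinite). -/

import Mathlib

open MeasureTheory ENNReal Filter

noncomputable section

/-- A (finite) Young function: an increasing convex function `φ : [0,∞) → [0,∞)`
with `φ 0 = 0` and `φ x → ∞` as `x → ∞`. -/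
def IsYoungFunction (φ : ℝ → ℝ) : Prop :=
  MonotoneOn φ (Set.Ici 0) ∧ ConvexOn ℝ (Set.Ici 0) φ ∧ φ 0 = 0 ∧
    Tendsto φ atTop atTop

/-- Generalized inverse of a Young function, as a map `ℝ≥0∞ → ℝ≥0∞`
(so that in particular `φ⁻¹(∞) = ∞`). -/
def yinv (φ : ℝ → ℝ) (y : ℝ≥0∞) : ℝ≥0∞ :=
  sInf {x : ℝ≥0∞ | ∃ r : ℝ, 0 ≤ r ∧ x = ENNReal.ofReal r ∧ y ≤ ENNReal.ofReal (φ r)}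

/-- The minorizing metric
`τ_{m,φ}(s,t) = max_{x ∈ {s,t}} ∫_0^{d(s,t)} φ⁻¹(1 / m(B(x,ε))) dε`,
with the conventions `1/0 = ∞`, `φ⁻¹(∞) = ∞`. -/
def tauDist {T : Type*} [MetricSpace T] [MeasurableSpace T]
    (m : Measure T) (φ : ℝ → ℝ) (s t : T) : ℝ≥0∞ :=
  max (∫⁻ ε in Set.Ioc (0 : ℝ) (dist s t), yinv φ (1 / m (Metric.closedBall s ε)))
    (∫⁻ ε in Set.Ioc (0 : ℝ) (dist s t), yinv φ (1 / m (Metric.closedBall t ε)))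

/-- `f^d(u,v) = |f(u) - f(v)| / d(u,v)`, equal to `0` on the diagonal. -/
def fdiv {T : Type*} [MetricSpace T] (f : T → ℝ) (p : T × T) : ℝ :=
  |f p.1 - f p.2| / dist p.1 p.2

/-- The Luxemburg norm `|g|^ν_χ = inf {a > 0 : ∫ χ(|g|/a) dν ≤ 1}`, with value `∞`
if no such `a` exists. -/
def luxNorm {X : Type*} [MeasurableSpace X] (ν : Measure X) (χ : ℝ → ℝ)
    (g : X → ℝ) : ℝ≥0∞ :=
  sInf {a : ℝ≥0∞ | ∃ b : ℝ, 0 < b ∧ a = ENNReal.ofReal b ∧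
    ∫⁻ u, ENNReal.ofReal (χ (|g u| / b)) ∂ν ≤ 1}

/-- The Amemiya norm `‖g‖^μ_χ = inf_{a>0} a (1 + ∫ χ(|g|/a) dμ)`. -/
def amemiyaNorm {X : Type*} [MeasurableSpace X] (μ : Measure X) (χ : ℝ → ℝ)
    (g : X → ℝ) : ℝ≥0∞ :=
  sInf {c : ℝ≥0∞ | ∃ a : ℝ, 0 < a ∧
    c = ENNReal.ofReal a * (1 + ∫⁻ u, ENNReal.ofReal (χ (|g u| / a)) ∂μ)}

/-- `r_0(x) = D(T)` and, for `k ≥ 1`,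
`r_k(x) = min {ε ≥ 0 : 1 / m(B(x,ε)) ≤ φ(R^k)}` (with `1/0 = ∞`). -/
def rad {T : Type*} [MetricSpace T] [MeasurableSpace T]
    (m : Measure T) (φ : ℝ → ℝ) (R : ℝ) : ℕ → T → ℝ
  | 0, _ => Metric.diam (Set.univ : Set T)
  | k + 1, x => sInf {ε : ℝ | 0 ≤ ε ∧
      1 / m (Metric.closedBall x ε) ≤ ENNReal.ofReal (φ (R ^ (k + 1)))}

/-- `r^l_k(x) = ∑_{i=k}^{l} 2^(i-k) r_i(x)`. -/
def radl {T : Type*} [MetricSpace T] [MeasurableSpace T]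
    (m : Measure T) (φ : ℝ → ℝ) (R : ℝ) (k l : ℕ) (x : T) : ℝ :=
  ∑ i ∈ Finset.Icc k l, (2 : ℝ) ^ (i - k) * rad m φ R i x

/-- The averaging operator `S_k f (x) = (1 / m(B_k(x))) ∫_{B_k(x)} f dm`,
with the convention `0/0 = 0`. -/
def avg {T : Type*} [MetricSpace T] [MeasurableSpace T]
    (m : Measure T) (φ : ℝ → ℝ) (R : ℝ) (k : ℕ) (f : T → ℝ) (x : T) : ℝ :=
  (∫ u in Metric.closedBall x (rad m φ R k x), f u ∂m) /
    (m (Metric.closedBall x (rad m φ R k x))).toReal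

/-- The iterated averaging operator `iterAvg k l f = S_l S_{l-1} ⋯ S_k f` (for `k ≤ l`). -/
def iterAvg {T : Type*} [MetricSpace T] [MeasurableSpace T]
    (m : Measure T) (φ : ℝ → ℝ) (R : ℝ) (k : ℕ) : ℕ → (T → ℝ) → T → ℝ
  | 0, f => avg m φ R 0 f
  | l + 1, f =>
      if l + 1 ≤ k then avg m φ R (l + 1) f
      else avg m φ R (l + 1) (iterAvg m φ R k l f)

/-- The set `{k ≥ 1 : B^l_k(s) ∪ B^l_k(t) ⊆ B°(u, r_{k-1}(u)) for every u ∈ B^l_k(x)}`,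
whose greatest element is `τ_x`. -/
def tauSet {T : Type*} [MetricSpace T] [MeasurableSpace T]
    (m : Measure T) (φ : ℝ → ℝ) (R : ℝ) (l : ℕ) (s t x : T) : Set ℕ :=
  {k : ℕ | 1 ≤ k ∧ ∀ u ∈ Metric.closedBall x (radl m φ R k l x),
    Metric.closedBall s (radl m φ R k l s) ∪ Metric.closedBall t (radl m φ R k l t) ⊆
      Metric.ball u (rad m φ R (k - 1) u)}

/-- Auxiliary kernel for the double-sum manipulation. -/
def Hfun (u v : ℕ → ℝ≥0∞) (k i : ℕ) : ℝ≥0∞ := if k ≤ i then u i * v k else 0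

/-- inequality (2.3) of the paper:
`∑_{k ≥ c} r_k(x) R^k ≤ (R/(R-1)) ∫_0^{r_c(x)} φ⁻¹(1/m(B(x,ε))) dε`. -/
theorem statement12 (T : Type) [MetricSpace T] [CompactSpace T]
    [MeasurableSpace T] [BorelSpace T]
    (m : Measure T) (hm : IsProbabilityMeasure m)
    (φ : ℝ → ℝ) (hφ : IsYoungFunction φ) (hφ1 : φ 1 = 1)
    (R : ℝ) (hR : 2 < R) :
    ∀ c : ℕ, 1 ≤ c → ∀ x : T,
      ∑' k : ℕ, ENNReal.ofReal (rad m φ R (c + k) x * R ^ (c + k)) ≤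
        ENNReal.ofReal (R / (R - 1)) *
          ∫⁻ ε in Set.Ioc (0 : ℝ) (rad m φ R c x),
            yinv φ (1 / m (Metric.closedBall x ε)) := by

  classical
  obtain ⟨hmono, hconv, hzero, htoptend⟩ := hφ
  intro c hc x
  have hR1 : (1:ℝ) < R := by linarith
  have hR0 : (0:ℝ) < R := by linarith
  have hRm1 : (0:ℝ) < R - 1 := by linarith
  set D : ℝ := Metric.diam (Set.univ : Set T) with hD
  have hD0 : 0 ≤ D := Metric.diam_nonneg
  have hballD : m (Metric.closedBall x D) = 1 := by
    have huniv : (Set.univ : Set T) ⊆ Metric.closedBall x D := by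
      intro y _
      exact Metric.dist_le_diam_of_mem isCompact_univ.isBounded (Set.mem_univ y)
        (Set.mem_univ x)
    have h1 : m (Metric.closedBall x D) ≤ 1 := prob_le_one
    have h2 : (1:ℝ≥0∞) ≤ m (Metric.closedBall x D) := by
      calc (1:ℝ≥0∞) = m Set.univ := measure_univ.symm
      _ ≤ m (Metric.closedBall x D) := measure_mono huniv
    exact le_antisymm h1 h2
  -- the defining sets
  set S : ℕ → Set ℝ := fun k => {ε : ℝ | 0 ≤ ε ∧
    1 / m (Metric.closedBall x ε) ≤ ENNReal.ofReal (φ (R ^ k))} with hS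
  set r : ℕ → ℝ := fun k => rad m φ R k x with hrdef
  have hgoalr : ∀ k, rad m φ R k x = r k := fun k => by rw [hrdef]
  simp only [hgoalr]
  have hrk : ∀ k : ℕ, r (k+1) = sInf (S (k+1)) := by
    intro k; simp [hrdef, rad, hS]
  have hφRk : ∀ k : ℕ, 1 ≤ k → (1:ℝ) ≤ φ (R ^ k) := by
    intro k hk
    have h1 : (1:ℝ) ≤ R ^ k := one_le_pow₀ (le_of_lt hR1)
    calc (1:ℝ) = φ 1 := hφ1.symm
    _ ≤ φ (R ^ k) := hmono (Set.mem_Ici.2 zero_le_one) (Set.mem_Ici.2 (by positivity)) h1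
  have hDS : ∀ k : ℕ, 1 ≤ k → D ∈ S k := by
    intro k hk
    refine ⟨hD0, ?_⟩
    rw [hballD]
    simpa using ENNReal.one_le_ofReal.2 (hφRk k hk)
  have hSbdd : ∀ k : ℕ, BddBelow (S k) := by
    intro k; exact ⟨0, fun ε hε => hε.1⟩
  have hr0 : ∀ k : ℕ, 0 ≤ r k := by
    intro k
    cases k with
    | zero => exact hD0
    | succ n =>
      rw [hrk]
      exact le_csInf ⟨D, hDS (n+1) (Nat.succ_le_succ (Nat.zero_le n))⟩
        (fun ε hε => hε.1)
  have hrD : ∀ k : ℕ, r k ≤ D := by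
    intro k
    cases k with
    | zero => exact le_refl D
    | succ n =>
      rw [hrk]
      exact csInf_le (hSbdd (n+1)) (hDS (n+1) (Nat.succ_le_succ (Nat.zero_le n)))
  have hSmono : ∀ k : ℕ, S (k+1) ⊆ S (k+2) := by
    intro k ε hε
    refine ⟨hε.1, hε.2.trans (ENNReal.ofReal_le_ofReal ?_)⟩
    exact hmono (Set.mem_Ici.2 (by positivity)) (Set.mem_Ici.2 (by positivity))
      (pow_le_pow_right₀ (le_of_lt hR1) (by omega))
  have hr_succ : ∀ k : ℕ, r (k+1) ≤ r k := by
    intro k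
    cases k with
    | zero => exact hrD 1
    | succ n =>
      rw [hrk, hrk]
      exact csInf_le_csInf (hSbdd (n+2))
        ⟨D, hDS (n+1) (Nat.succ_le_succ (Nat.zero_le n))⟩ (hSmono n)
  have hr_anti : Antitone r := antitone_nat_of_succ_le hr_succ
  -- key: below r k, the measure is small
  have key : ∀ k : ℕ, 1 ≤ k → ∀ ε : ℝ, 0 ≤ ε → ε < r k →
      ENNReal.ofReal (φ (R ^ k)) < 1 / m (Metric.closedBall x ε) := by
    intro k hk ε hε0 hεr
    by_contra h
    push_neg at h
    obtain ⟨n, rfl⟩ := Nat.exists_eq_add_of_le hk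
    have : ε ∈ S (1 + n) := ⟨hε0, h⟩
    have h2 : r (1+n) ≤ ε := by
      have h1n : 1 + n = n + 1 := by omega
      rw [h1n] at this ⊢
      rw [hrk]; exact csInf_le (hSbdd (n+1)) this
    linarith
  -- yinv lower bound
  have yinv_ge : ∀ (s : ℝ), 0 ≤ s → ∀ y : ℝ≥0∞,
      ENNReal.ofReal (φ s) < y → ENNReal.ofReal s ≤ yinv φ y := by
    intro s hs y hy
    refine le_sInf ?_
    rintro z ⟨t, ht0, rfl, hty⟩
    refine ENNReal.ofReal_le_ofReal ?_
    by_contra h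
    push_neg at h
    have : φ t ≤ φ s := hmono (Set.mem_Ici.2 ht0) (Set.mem_Ici.2 hs) h.le
    have : y ≤ ENNReal.ofReal (φ s) := hty.trans (ENNReal.ofReal_le_ofReal this)
    exact absurd (hy.trans_le this) (lt_irrefl _)
  have yinv_top : yinv φ ⊤ = ⊤ := by
    rw [yinv, sInf_eq_top]
    rintro a ⟨t, ht0, rfl, hty⟩
    exact absurd (top_le_iff.1 hty) ENNReal.ofReal_ne_top
  -- the infimum L
  have hbdd : BddBelow (Set.range r) := ⟨0, by rintro _ ⟨k, rfl⟩; exact hr0 k⟩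
  set L : ℝ := ⨅ k, r k with hL
  have hL0 : 0 ≤ L := le_ciInf hr0
  have hLle : ∀ k, L ≤ r k := fun k => ciInf_le hbdd k
  have hRdivpos : (0:ℝ) < R / (R-1) := by positivity
  rcases lt_or_ge 0 L with hLpos | hLnonpos
  · -- case L > 0 : RHS is infinite
    have htopinner : ∀ ε ∈ Set.Ioo (0:ℝ) L,
        yinv φ (1 / m (Metric.closedBall x ε)) = ⊤ := by
      intro ε hε
      have hmeq : 1 / m (Metric.closedBall x ε) = ⊤ := by
        by_contra hne
        have htend : Tendsto (fun k : ℕ => φ (R ^ k)) atTop atTop :=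
          htoptend.comp (tendsto_pow_atTop_atTop_of_one_lt hR1)
        obtain ⟨k, hk1, hkM⟩ :=
          ((eventually_ge_atTop 1).and
            (htend.eventually_ge_atTop ((1 / m (Metric.closedBall x ε)).toReal))).exists
        have hlt := key k hk1 ε (le_of_lt hε.1) (lt_of_lt_of_le hε.2 (hLle k))
        have : 1 / m (Metric.closedBall x ε) ≤ ENNReal.ofReal (φ (R ^ k)) := by
          calc 1 / m (Metric.closedBall x ε)
              = ENNReal.ofReal ((1 / m (Metric.closedBall x ε)).toReal) :=
                (ENNReal.ofReal_toReal hne).symm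
          _ ≤ ENNReal.ofReal (φ (R ^ k)) := ENNReal.ofReal_le_ofReal hkM
        exact absurd (hlt.trans_le this) (lt_irrefl _)
      rw [hmeq, yinv_top]
    have hIoosub : Set.Ioo (0:ℝ) L ⊆ Set.Ioc (0:ℝ) (r c) := by
      intro ε hε
      exact ⟨hε.1, le_trans (le_of_lt hε.2) (hLle c)⟩
    have hbig : (⊤:ℝ≥0∞) ≤ ∫⁻ ε in Set.Ioc (0:ℝ) (r c),
        yinv φ (1 / m (Metric.closedBall x ε)) := by
      calc (⊤:ℝ≥0∞) = ⊤ * volume (Set.Ioo (0:ℝ) L) := by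
            rw [Real.volume_Ioo, ENNReal.top_mul]
            simp only [ne_eq, ENNReal.ofReal_eq_zero, not_le]
            linarith
      _ = ∫⁻ ε in Set.Ioo (0:ℝ) L, (⊤:ℝ≥0∞) := (setLIntegral_const _ _).symm
      _ = ∫⁻ ε in Set.Ioo (0:ℝ) L, yinv φ (1 / m (Metric.closedBall x ε)) := by
            refine setLIntegral_congr_fun measurableSet_Ioo ?_
            exact (fun ε hε => (htopinner ε hε).symm)
      _ ≤ _ := lintegral_mono_set hIoosub
    have : ENNReal.ofReal (R / (R - 1)) *
        ∫⁻ ε in Set.Ioc (0:ℝ) (r c), yinv φ (1 / m (Metric.closedBall x ε)) = ⊤ := by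
      rw [top_le_iff.1 hbig, ENNReal.mul_top]
      simp only [ne_eq, ENNReal.ofReal_eq_zero, not_le]
      linarith
    rw [this]
    exact le_top
  · -- case L = 0
    have hLeq : L = 0 := le_antisymm hLnonpos hL0
    have hrtend : Tendsto r atTop (nhds 0) := by
      have := tendsto_atTop_ciInf hr_anti hbdd
      rwa [← hL, hLeq] at this
    set d : ℕ → ℝ := fun i => r i - r (i+1) with hd
    have hd0 : ∀ i, 0 ≤ d i := fun i => sub_nonneg.2 (hr_succ i)
    -- telescoping sums
    have hpartial : ∀ k N : ℕ, ∑ j ∈ Finset.range N, d (k + j) = r k - r (k + N) := by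
      intro k N
      induction N with
      | zero => simp
      | succ n ih =>
        rw [Finset.sum_range_succ, ih]
        have : k + (n+1) = (k + n) + 1 := by omega
        rw [this]; simp [hd]
    have hsummable : ∀ k : ℕ, Summable (fun j => d (k + j)) := by
      intro k
      refine summable_of_sum_range_le (c := r k) (fun j => hd0 _) (fun N => ?_)
      rw [hpartial k N]
      have := hr0 (k + N)
      linarith
    have htsum : ∀ k : ℕ, ∑' j, d (k + j) = r k := by
      intro k
      have h1 : Tendsto (fun N => ∑ j ∈ Finset.range N, d (k + j)) atTop
          (nhds (∑' j, d (k + j))) := (hsummable k).hasSum.tendsto_sum_nat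
      have h2 : Tendsto (fun N => ∑ j ∈ Finset.range N, d (k + j)) atTop
          (nhds (r k)) := by
        simp only [hpartial]
        have hA : Tendsto (fun N : ℕ => r (k + N)) atTop (nhds 0) := by
          have := hrtend.comp (tendsto_add_atTop_nat k)
          simpa [Nat.add_comm, Function.comp_def] using this
        have := (tendsto_const_nhds (x := r k)).sub hA
        simpa using this
      exact tendsto_nhds_unique h1 h2
    have htel : ∀ k : ℕ, ENNReal.ofReal (r k) = ∑' j, ENNReal.ofReal (d (k + j)) := by
      intro k
      rw [← htsum k, ENNReal.ofReal_tsum_of_nonneg (fun j => hd0 _) (hsummable k)]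
    -- the disjoint intervals
    set I : ℕ → Set ℝ := fun i => Set.Ioo (r (c + i + 1)) (r (c + i)) with hI
    have hInt : ∀ i : ℕ, ENNReal.ofReal (R ^ (c + i)) * ENNReal.ofReal (d (c + i)) ≤
        ∫⁻ ε in I i, yinv φ (1 / m (Metric.closedBall x ε)) := by
      intro i
      have hconst : ∀ ε ∈ I i, ENNReal.ofReal (R ^ (c + i)) ≤
          yinv φ (1 / m (Metric.closedBall x ε)) := by
        intro ε hε
        have hε0 : 0 ≤ ε := le_trans (hr0 (c + i + 1)) (le_of_lt hε.1)
        exact yinv_ge (R ^ (c+i)) (by positivity) _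
          (key (c+i) (by omega) ε hε0 hε.2)
      calc ENNReal.ofReal (R ^ (c + i)) * ENNReal.ofReal (d (c + i))
          = ENNReal.ofReal (R ^ (c + i)) * volume (I i) := by
            rw [hI]; simp only [Real.volume_Ioo]; rfl
      _ = ∫⁻ _ in I i, ENNReal.ofReal (R ^ (c + i)) := by
            rw [setLIntegral_const]
      _ ≤ ∫⁻ ε in I i, yinv φ (1 / m (Metric.closedBall x ε)) :=
            setLIntegral_mono' measurableSet_Ioo hconst
    have hdisj : Pairwise (Function.onFun Disjoint I) := by
      intro i j hij
      rcases hij.lt_or_gt with h | h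
      · refine Set.disjoint_left.2 (fun a ha hb => ?_)
        have h1 : r (c + j) ≤ r (c + i + 1) := hr_anti (by omega)
        simp only [hI, Set.mem_Ioo] at ha hb
        linarith [hb.2, ha.1]
      · refine Set.disjoint_left.2 (fun a ha hb => ?_)
        have h1 : r (c + i) ≤ r (c + j + 1) := hr_anti (by omega)
        simp only [hI, Set.mem_Ioo] at ha hb
        linarith [ha.2, hb.1]
    have hsub : (⋃ i, I i) ⊆ Set.Ioc (0:ℝ) (r c) := by
      intro ε hε
      obtain ⟨i, hi⟩ := Set.mem_iUnion.1 hε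
      exact ⟨lt_of_le_of_lt (hr0 _) hi.1,
        le_trans (le_of_lt hi.2) (hr_anti (by omega))⟩
    have hsum_le_int : ∑' i, ENNReal.ofReal (R ^ (c + i)) * ENNReal.ofReal (d (c + i)) ≤
        ∫⁻ ε in Set.Ioc (0:ℝ) (r c), yinv φ (1 / m (Metric.closedBall x ε)) := by
      calc ∑' i, ENNReal.ofReal (R ^ (c + i)) * ENNReal.ofReal (d (c + i))
          ≤ ∑' i, ∫⁻ ε in I i, yinv φ (1 / m (Metric.closedBall x ε)) :=
            ENNReal.tsum_le_tsum hInt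
      _ = ∫⁻ ε in ⋃ i, I i, yinv φ (1 / m (Metric.closedBall x ε)) :=
            (lintegral_iUnion (fun i => measurableSet_Ioo) hdisj _).symm
      _ ≤ _ := lintegral_mono_set hsub
    -- double sum manipulation
    set H : ℕ → ℕ → ℝ≥0∞ := Hfun (fun i => ENNReal.ofReal (d (c + i)))
      (fun k => ENNReal.ofReal (R ^ (c + k))) with hH
    have hinner : ∀ k : ℕ, ENNReal.ofReal (r (c + k) * R ^ (c + k)) = ∑' i, H k i := by
      intro k
      have hinj : Function.Injective (fun j : ℕ => k + j) := add_right_injective k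
      have hrange : Function.support (H k) ⊆ Set.range (fun j : ℕ => k + j) := by
        intro i hi
        by_contra hni
        have hik : ¬ k ≤ i := by
          intro h; exact hni ⟨i - k, show k + (i - k) = i by omega⟩
        apply hi
        simp only [hH, Hfun, if_neg hik]
      calc ENNReal.ofReal (r (c + k) * R ^ (c + k))
          = ENNReal.ofReal (r (c + k)) * ENNReal.ofReal (R ^ (c + k)) :=
            ENNReal.ofReal_mul (hr0 _)
      _ = (∑' j, ENNReal.ofReal (d (c + k + j))) * ENNReal.ofReal (R ^ (c + k)) := by
            rw [htel (c + k)]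
      _ = ∑' j, ENNReal.ofReal (d (c + k + j)) * ENNReal.ofReal (R ^ (c + k)) :=
            ENNReal.tsum_mul_right.symm
      _ = ∑' j, H k (k + j) := by
            congr 1; funext j
            simp only [hH, Hfun, if_pos (Nat.le_add_right k j)]
            rw [← Nat.add_assoc]
      _ = ∑' i, H k i := hinj.tsum_eq hrange
    have hgeom : ∀ i : ℕ, ∑ k ∈ Finset.range (i+1), R ^ (c + k) ≤
        R / (R - 1) * R ^ (c + i) := by
      intro i
      have hne : R ≠ 1 := ne_of_gt hR1
      have h2 : ∑ k ∈ Finset.range (i+1), R ^ (c + k)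
          = R ^ c * ((R ^ (i+1) - 1) / (R - 1)) := by
        rw [← geom_sum_eq hne, Finset.mul_sum]
        congr 1; funext k; rw [pow_add]
      rw [h2]
      have hpow : (0:ℝ) ≤ R ^ c := by positivity
      have h1 : (R ^ (i+1) - 1) / (R - 1) ≤ R ^ (i+1) / (R - 1) := by
        gcongr
        · linarith
      calc R ^ c * ((R ^ (i+1) - 1) / (R - 1)) ≤ R ^ c * (R ^ (i+1) / (R - 1)) := by
            exact mul_le_mul_of_nonneg_left h1 hpow
      _ = R / (R - 1) * R ^ (c + i) := by rw [pow_add, pow_succ]; ring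
    have hHsum : ∀ i : ℕ, ∑' k, H k i ≤
        ENNReal.ofReal (R / (R-1)) *
          (ENNReal.ofReal (R ^ (c + i)) * ENNReal.ofReal (d (c + i))) := by
      intro i
      have hfin : ∑' k, H k i = ∑ k ∈ Finset.range (i+1), H k i := by
        apply tsum_eq_sum
        intro k hk
        simp only [Finset.mem_range] at hk
        simp only [hH, Hfun, if_neg (show ¬ k ≤ i by omega)]
      have heq : ∀ k ∈ Finset.range (i+1), H k i
          = ENNReal.ofReal (d (c + i)) * ENNReal.ofReal (R ^ (c + k)) := by
        intro k hk
        simp only [Finset.mem_range] at hk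
        simp only [hH, Hfun, if_pos (show k ≤ i by omega)]
      rw [hfin, Finset.sum_congr rfl heq, ← Finset.mul_sum,
        ← ENNReal.ofReal_sum_of_nonneg (fun k _ => by positivity)]
      calc ENNReal.ofReal (d (c + i)) *
            ENNReal.ofReal (∑ k ∈ Finset.range (i+1), R ^ (c + k))
          ≤ ENNReal.ofReal (d (c + i)) * ENNReal.ofReal (R / (R-1) * R ^ (c + i)) :=
            mul_le_mul_right (ENNReal.ofReal_le_ofReal (hgeom i)) _
      _ = ENNReal.ofReal (R / (R-1)) *
            (ENNReal.ofReal (R ^ (c + i)) * ENNReal.ofReal (d (c + i))) := by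
            rw [ENNReal.ofReal_mul (le_of_lt hRdivpos)]
            ring
    calc ∑' k, ENNReal.ofReal (r (c + k) * R ^ (c + k))
        = ∑' k, ∑' i, H k i := by
          congr 1; funext k; exact hinner k
    _ = ∑' i, ∑' k, H k i := ENNReal.tsum_comm
    _ ≤ ∑' i, ENNReal.ofReal (R / (R-1)) *
          (ENNReal.ofReal (R ^ (c + i)) * ENNReal.ofReal (d (c + i))) :=
          ENNReal.tsum_le_tsum hHsum
    _ = ENNReal.ofReal (R / (R-1)) *
          ∑' i, ENNReal.ofReal (R ^ (c + i)) * ENNReal.ofReal (d (c + i)) :=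
          ENNReal.tsum_mul_left
    _ ≤ ENNReal.ofReal (R / (R-1)) *
          ∫⁻ ε in Set.Ioc (0:ℝ) (r c), yinv φ (1 / m (Metric.closedBall x ε)) :=
          mul_le_mul_right hsum_le_int _
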